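/- Let p : [n]^k → Γ_k be a monotone partial-information function and s any slice. Let J_s(p) be the coordinatewise maximum (join) of the set Post_s(p) of postfixed points of p on s, and M_s(p) the coordinatewise minimum (meet) of Pre_s(p). Then p(J_s(p))_i ∈ {0, ≥} for all free coordinates i ∈ F(s), and p(M_s(p))_i ∈ {0, ≤} for all i ∈ F(s). -/

import Mathlib

/-- Symbols of the partial-information alphabet: −1, 0, 1, ≤, ≥, ◇. -/
inductive PISym : Type where
  | neg | zero | pos | sle | sge | dia
deriving DecidableEq

/-- Points of the `k`-dimensional grid, as integer vectors. -/
abbrev Pt (k : ℕ) := Fin k → ℤ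

/-- `x ∈ [n]^k`. -/
def inGrid (n k : ℕ) (x : Pt k) : Prop := ∀ i, 1 ≤ x i ∧ x i ≤ (n : ℤ)

/-- The `i`-th standard unit vector. -/
def eVec (k : ℕ) (i : Fin k) : Pt k := fun j => if j = i then 1 else 0

/-- A slice of `[n]^k`: `none` marks a free coordinate. -/
abbrev Slice (k : ℕ) := Fin k → Option ℤ

def fullSlice (k : ℕ) : Slice k := fun _ => none

def validSlice (n : ℕ) {k : ℕ} (s : Slice k) : Prop :=
  ∀ i v, s i = some v → 1 ≤ v ∧ v ≤ (n : ℤ)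

def inSlice {k : ℕ} (s : Slice k) (x : Pt k) : Prop :=
  ∀ i v, s i = some v → x i = v

/-- Monotone partial-information function (Definition 2.4). -/
def MonoPI (n k : ℕ) (p1 : Pt k → Fin k → PISym) (p2 : Pt k → PISym) : Prop :=
  (∀ x, inGrid n k x → p2 x = PISym.pos ∨ p2 x = PISym.neg ∨ p2 x = PISym.dia) ∧
  (∀ x y, inGrid n k x → inGrid n k y → ∀ i : Fin k,
    (p1 x i = PISym.pos → x ≤ y → y i = x i →
      p1 y i = PISym.pos ∧
        (y i < (n : ℤ) → p1 (y + eVec k i) i ∈ ({PISym.pos, PISym.zero, PISym.sge} : Set PISym))) ∧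
    (p1 x i = PISym.neg → y ≤ x → y i = x i →
      p1 y i = PISym.neg ∧
        (1 < y i → p1 (y - eVec k i) i ∈ ({PISym.neg, PISym.zero, PISym.sle} : Set PISym))) ∧
    (p1 x i = PISym.zero → y ≤ x → y i = x i →
      p1 y i ∈ ({PISym.zero, PISym.neg, PISym.sle} : Set PISym)) ∧
    (p1 x i = PISym.zero → x ≤ y → y i = x i →
      p1 y i ∈ ({PISym.zero, PISym.pos, PISym.sge} : Set PISym)) ∧
    (p1 x i = PISym.sle → y ≤ x → y i = x i → p1 y i ∈ ({PISym.neg, PISym.sle} : Set PISym)) ∧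
    (p1 x i = PISym.sge → x ≤ y → y i = x i → p1 y i ∈ ({PISym.pos, PISym.sge} : Set PISym))) ∧
  (∀ x, inGrid n k x → ∀ i : Fin k,
    (x i = 1 → p1 x i ∈ ({PISym.zero, PISym.pos, PISym.sge} : Set PISym)) ∧
    (x i = (n : ℤ) → p1 x i ∈ ({PISym.zero, PISym.neg, PISym.sle} : Set PISym))) ∧
  (∀ x y, inGrid n k x → inGrid n k y → x ≤ y →
    (p2 x = PISym.pos → p2 y = PISym.pos) ∧ (p2 y = PISym.neg → p2 x = PISym.neg))

/-- Postfixed points of a PI function on a slice. -/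
def Post (n k : ℕ) (p1 : Pt k → Fin k → PISym) (s : Slice k) : Set (Pt k) :=
  {x | inGrid n k x ∧ inSlice s x ∧
       ∀ i, s i = none → p1 x i ∈ ({PISym.pos, PISym.zero, PISym.sge} : Set PISym)}

/-- Prefixed points of a PI function on a slice. -/
def Pre (n k : ℕ) (p1 : Pt k → Fin k → PISym) (s : Slice k) : Set (Pt k) :=
  {x | inGrid n k x ∧ inSlice s x ∧
       ∀ i, s i = none → p1 x i ∈ ({PISym.neg, PISym.zero, PISym.sle} : Set PISym)}

/-- Safe PI functions (Definition 2.8). -/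
def SafePI (n k : ℕ) (p1 : Pt k → Fin k → PISym) (p2 : Pt k → PISym) : Prop :=
  MonoPI n k p1 p2 ∧
  ∀ s : Slice k, validSlice n s →
    (∀ J, IsGreatest (Post n k p1 s) J →
      ∀ x, inGrid n k x → inSlice s x → x ≤ J → x ≠ J →
        (∀ i, s i = none → x i < J i →
          p1 x i ∈ ({PISym.neg, PISym.zero, PISym.pos} : Set PISym)) ∧
        (∃ i, s i = none ∧ x i < J i ∧ p1 x i = PISym.pos)) ∧
    (∀ M, IsLeast (Pre n k p1 s) M →
      ∀ x, inGrid n k x → inSlice s x → M ≤ x → x ≠ M →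
        (∀ i, s i = none → M i < x i →
          p1 x i ∈ ({PISym.neg, PISym.zero, PISym.pos} : Set PISym)) ∧
        (∃ i, s i = none ∧ M i < x i ∧ p1 x i = PISym.neg))

/-- `x^{−i}` for `i ∈ [k]`. -/
def dminus {k : ℕ} (i : Fin k) (x : Pt k) : Pt k :=
  fun j => if j ≠ i ∧ 1 < x j then x j - 1 else x j

/-- `x^{−(k+1)}`. -/
def dminusAll {k : ℕ} (x : Pt k) : Pt k :=
  fun j => if 1 < x j then x j - 1 else x j

/-- `x^{+i}` for `i ∈ [k]`. -/
def dplus (n : ℕ) {k : ℕ} (i : Fin k) (x : Pt k) : Pt k :=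
  fun j => if j ≠ i ∧ x j < (n : ℤ) then x j + 1 else x j

/-- `x^{+(k+1)}`. -/
def dplusAll (n : ℕ) {k : ℕ} (x : Pt k) : Pt k :=
  fun j => if x j < (n : ℤ) then x j + 1 else x j

def IntPlus {k : ℕ} (p1 : Pt k → Fin k → PISym) (i : Fin k) : Set (Pt k) :=
  {x | p1 (dminus i x) i = PISym.pos}

def IntPlusLast {k : ℕ} (p1 : Pt k → Fin k → PISym) (p2 : Pt k → PISym) : Set (Pt k) :=
  {x | p2 (dminusAll x) = PISym.pos ∨
    ∃ i, p1 (dminus i x) i ∈ ({PISym.pos, PISym.zero, PISym.sge} : Set PISym) ∧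
         p2 (dminus i x) = PISym.pos}

def IntMinus (n : ℕ) {k : ℕ} (p1 : Pt k → Fin k → PISym) (i : Fin k) : Set (Pt k) :=
  {x | p1 (dplus n i x) i = PISym.neg}

def IntMinusLast (n : ℕ) {k : ℕ} (p1 : Pt k → Fin k → PISym) (p2 : Pt k → PISym) : Set (Pt k) :=
  {x | p2 (dplusAll n x) = PISym.neg ∨
    ∃ i, p1 (dplus n i x) i ∈ ({PISym.neg, PISym.zero, PISym.sle} : Set PISym) ∧
         p2 (dplus n i x) = PISym.neg}

/-- `Cand⁺(p)` relative to `J = J(p)` and `M = M(p)`. -/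
def CandPlus (n k : ℕ) (p1 : Pt k → Fin k → PISym) (p2 : Pt k → PISym) (J M : Pt k) :
    Set (Pt k) :=
  {x | inGrid n k x ∧ J ≤ x ∧ x ≤ M ∧
    (∀ i, p1 x i ≠ PISym.neg ∧ x ∉ IntPlus p1 i) ∧
    p2 x ≠ PISym.neg ∧ x ∉ IntPlusLast p1 p2}

/-- `Cand⁻(p)` relative to `J = J(p)` and `M = M(p)`. -/
def CandMinus (n k : ℕ) (p1 : Pt k → Fin k → PISym) (p2 : Pt k → PISym) (J M : Pt k) :
    Set (Pt k) :=
  {x | inGrid n k x ∧ J ≤ x ∧ x ≤ M ∧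
    (∀ i, p1 x i ≠ PISym.pos ∧ x ∉ IntMinus n p1 i) ∧
    p2 x ≠ PISym.pos ∧ x ∉ IntMinusLast n p1 p2}

/-- The information partial order on symbols: `symDom a b` means `a ⇒ b`. -/
def symDom (a b : PISym) : Prop :=
  b = PISym.dia ∨ a = b ∨ (a = PISym.pos ∧ b = PISym.sge) ∨
  (a = PISym.zero ∧ (b = PISym.sge ∨ b = PISym.sle)) ∨ (a = PISym.neg ∧ b = PISym.sle)

/-- `p ⇒ p'`: `p` dominates (is more informative than) `p'`. -/
def PIdom (n k : ℕ) (p1 : Pt k → Fin k → PISym) (p2 : Pt k → PISym)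
    (q1 : Pt k → Fin k → PISym) (q2 : Pt k → PISym) : Prop :=
  ∀ x, inGrid n k x → (∀ i, symDom (p1 x i) (q1 x i)) ∧ symDom (p2 x) (q2 x)

/-- A sign value `a ∈ {−1,0,1}` is consistent with a symbol `b`. -/
def consS (a : ℤ) (b : PISym) : Prop :=
  match b with
  | PISym.dia => True
  | PISym.pos => a = 1
  | PISym.neg => a = -1
  | PISym.zero => a = 0
  | PISym.sge => a = 0 ∨ a = 1
  | PISym.sle => a = -1 ∨ a = 0

/-- A sign function `f` is consistent with the PI function `p` (i.e., `f ⇒ p`). -/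
def SignCons (n k : ℕ) (f1 : Pt k → Pt k) (f2 : Pt k → ℤ)
    (p1 : Pt k → Fin k → PISym) (p2 : Pt k → PISym) : Prop :=
  ∀ x, inGrid n k x → (∀ i, consS (f1 x i) (p1 x i)) ∧ consS (f2 x) (p2 x)

/-- Monotone sign function: `x ↦ (x + f1 x, f2 x)` is well defined and monotone. -/
def MonoSign (n k : ℕ) (f1 : Pt k → Pt k) (f2 : Pt k → ℤ) : Prop :=
  (∀ x, inGrid n k x →
    (∀ i, f1 x i = -1 ∨ f1 x i = 0 ∨ f1 x i = 1) ∧ (f2 x = 1 ∨ f2 x = -1)) ∧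
  (∀ x, inGrid n k x → inGrid n k (x + f1 x)) ∧
  (∀ a b, inGrid n k a → inGrid n k b → a ≤ b → a + f1 a ≤ b + f1 b ∧ f2 a ≤ f2 b)

def PostF (n k : ℕ) (f1 : Pt k → Pt k) (s : Slice k) : Set (Pt k) :=
  {x | inGrid n k x ∧ inSlice s x ∧ ∀ i, s i = none → 0 ≤ f1 x i}

def PreF (n k : ℕ) (f1 : Pt k → Pt k) (s : Slice k) : Set (Pt k) :=
  {x | inGrid n k x ∧ inSlice s x ∧ ∀ i, s i = none → f1 x i ≤ 0}

/-- Safe sign functions (conditions (1') and (2') of Definition 2.8). -/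
def SafeSign (n k : ℕ) (f1 : Pt k → Pt k) (f2 : Pt k → ℤ) : Prop :=
  MonoSign n k f1 f2 ∧
  ∀ s : Slice k, validSlice n s →
    (∀ J, IsGreatest (PostF n k f1 s) J →
      ∀ x, inGrid n k x → inSlice s x → x ≤ J → x ≠ J →
        ∃ i, s i = none ∧ x i < J i ∧ f1 x i = 1) ∧
    (∀ M, IsLeast (PreF n k f1 s) M →
      ∀ x, inGrid n k x → inSlice s x → M ≤ x → x ≠ M →
        ∃ i, s i = none ∧ M i < x i ∧ f1 x i = -1)

/-- The revealed solutions of a PI function. -/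
def SolPI (n k : ℕ) (p1 : Pt k → Fin k → PISym) (p2 : Pt k → PISym) : Set (Pt k) :=
  {x | inGrid n k x ∧
    (((∀ i, p1 x i ∈ ({PISym.pos, PISym.zero, PISym.sge} : Set PISym)) ∧ p2 x = PISym.pos) ∨
     ((∀ i, p1 x i ∈ ({PISym.neg, PISym.zero, PISym.sle} : Set PISym)) ∧ p2 x = PISym.neg))}

/-- `x ≪_s y` : `x ⪯ y` with strict inequality in every free coordinate of `s`. -/
def lls {k : ℕ} (s : Slice k) (x y : Pt k) : Prop :=
  x ≤ y ∧ ∀ i, s i = none → x i < y i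

/-- `s` is a slice witnessing `ŝ(x,p) ≠ nil`: `x ∈ L_s` and `x ≪_s J_s(p)`. -/
def HasSlice (n k : ℕ) (p1 : Pt k → Fin k → PISym) (x : Pt k) (s : Slice k) : Prop :=
  validSlice n s ∧ inSlice s x ∧ ∃ J, IsGreatest (Post n k p1 s) J ∧ lls s x J

/-- `s = ŝ(x,p)`: `s` is the maximal slice with `x ∈ L_s` and `x ≪_s J_s(p)`. -/
def MaxSlice (n k : ℕ) (p1 : Pt k → Fin k → PISym) (x : Pt k) (s : Slice k) : Prop :=
  HasSlice n k p1 x s ∧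
  ∀ s', HasSlice n k p1 x s' → ∀ i, s' i = none → s i = none

set_option maxHeartbeats 1000000 in
/-- Lemma 2.6: at the join of `Post_s(p)` the free coordinates read `{0, ≥}`,
and at the meet of `Pre_s(p)` they read `{0, ≤}`. -/
theorem stmt3 (n k : ℕ) (p1 : Pt k → Fin k → PISym) (p2 : Pt k → PISym)
    (hp : MonoPI n k p1 p2) (s : Slice k) (hs : validSlice n s) :
    (∀ J, IsGreatest (Post n k p1 s) J →
      ∀ i, s i = none → p1 J i = PISym.zero ∨ p1 J i = PISym.sge) ∧
    (∀ M, IsLeast (Pre n k p1 s) M →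
      ∀ i, s i = none → p1 M i = PISym.zero ∨ p1 M i = PISym.sle) := by
  obtain ⟨_, hmono, hbdry, _⟩ := hp
  constructor
  · intro J hJ i hi
    obtain ⟨⟨hJg, hJs, hJp⟩, hmax⟩ := hJ
    rcases hJp i hi with hpos | hzero | hsge
    · -- p1 J i = pos : contradiction
      exfalso
      -- J i < n
      have hJin : J i < (n : ℤ) := by
        rcases lt_or_eq_of_le (hJg i).2 with h | h
        · exact h
        · rcases (hbdry J hJg i).2 h with h' | h' | h' <;> simp_all [hpos]
      set y : Pt k := J + eVec k i with hy
      have hyj : ∀ j, j ≠ i → y j = J j := by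
        intro j hj; simp [hy, eVec, hj, Pi.add_apply]
      have hyi : y i = J i + 1 := by simp [hy, eVec, Pi.add_apply]
      have hle : J ≤ y := by
        intro j
        by_cases hj : j = i
        · subst hj; rw [hyi]; linarith
        · rw [hyj j hj]
      have hyg : inGrid n k y := by
        intro j
        by_cases hj : j = i
        · subst hj; rw [hyi]; exact ⟨by linarith [(hJg j).1], Int.add_one_le_iff.mpr hJin⟩
        · rw [hyj j hj]; exact hJg j
      have hys : inSlice s y := by
        intro j v hv
        have hj : j ≠ i := by intro h; subst h; rw [hi] at hv; exact nomatch hv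
        rw [hyj j hj]; exact hJs j v hv
      have hyp : ∀ j, s j = none → p1 y j ∈ ({PISym.pos, PISym.zero, PISym.sge} : Set PISym) := by
        intro j hjn
        by_cases hj : j = i
        · subst hj
          have := ((hmono J J hJg hJg j).1 hpos le_rfl rfl).2 hJin
          exact this
        · have hyjj : y j = J j := hyj j hj
          rcases hJp j hjn with h | h | h
          · exact Or.inl (((hmono J y hJg hyg j).1 h hle hyjj).1)
          · rcases (hmono J y hJg hyg j).2.2.2.1 h hle hyjj with h' | h' | h'
            · exact Or.inr (Or.inl h')
            · exact Or.inl h'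
            · exact Or.inr (Or.inr h')
          · rcases (hmono J y hJg hyg j).2.2.2.2.2 h hle hyjj with h' | h'
            · exact Or.inl h'
            · exact Or.inr (Or.inr h')
      have : y ∈ Post n k p1 s := ⟨hyg, hys, hyp⟩
      have := hmax this i
      rw [hyi] at this; linarith
    · exact Or.inl hzero
    · exact Or.inr hsge
  · intro M hM i hi
    obtain ⟨⟨hMg, hMs, hMp⟩, hmin⟩ := hM
    rcases hMp i hi with hneg | hzero | hsle
    · exfalso
      have hMi1 : 1 < M i := by
        rcases lt_or_eq_of_le (hMg i).1 with h | h
        · exact h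
        · rcases (hbdry M hMg i).1 h.symm with h' | h' | h' <;> simp_all [hneg]
      set y : Pt k := M - eVec k i with hy
      have hyj : ∀ j, j ≠ i → y j = M j := by
        intro j hj; simp [hy, eVec, hj, Pi.sub_apply]
      have hyi : y i = M i - 1 := by simp [hy, eVec, Pi.sub_apply]
      have hle : y ≤ M := by
        intro j
        by_cases hj : j = i
        · subst hj; rw [hyi]; linarith
        · rw [hyj j hj]
      have hyg : inGrid n k y := by
        intro j
        by_cases hj : j = i
        · subst hj; rw [hyi]; exact ⟨by have := Int.lt_iff_add_one_le.mp hMi1; linarith, by linarith [(hMg j).2]⟩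
        · rw [hyj j hj]; exact hMg j
      have hys : inSlice s y := by
        intro j v hv
        have hj : j ≠ i := by intro h; subst h; rw [hi] at hv; exact nomatch hv
        rw [hyj j hj]; exact hMs j v hv
      have hyp : ∀ j, s j = none → p1 y j ∈ ({PISym.neg, PISym.zero, PISym.sle} : Set PISym) := by
        intro j hjn
        by_cases hj : j = i
        · subst hj
          exact ((hmono M M hMg hMg j).2.1 hneg le_rfl rfl).2 hMi1
        · have hyjj : y j = M j := hyj j hj
          rcases hMp j hjn with h | h | h
          · exact Or.inl (((hmono M y hMg hyg j).2.1 h hle hyjj).1)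
          · rcases (hmono M y hMg hyg j).2.2.1 h hle hyjj with h' | h' | h'
            · exact Or.inr (Or.inl h')
            · exact Or.inl h'
            · exact Or.inr (Or.inr h')
          · rcases (hmono M y hMg hyg j).2.2.2.2.1 h hle hyjj with h' | h'
            · exact Or.inl h'
            · exact Or.inr (Or.inr h')
      have : y ∈ Pre n k p1 s := ⟨hyg, hys, hyp⟩
      have := hmin this i
      rw [hyi] at this; linarith
    · exact Or.inl hzero
    · exact Or.inr hsle
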